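/- Let $\mu_t$ be a Gibbs measure on $\Sigma$ for the potential $\varphi_t(\mathbf{i}) = \log(\|A_{i_1}|E(\sigma\mathbf{i})\|^t \lambda_{i_1}^{-P(t)})$, i.e. there exists $C(t) > 1$ such that $C(t)^{-1} \leq \mu_t([\mathbf{i}|_n]) / (\|A_{\mathbf{i}|_n}|E(\sigma^n\mathbf{i})\|^t \lambda_{\mathbf{i}|_n}^{-P(t)}) \leq C(t)$ for all $\mathbf{i}$ and $n$. Suppose additionally there is $C'>0$ with $C'\|A_{\mathbf{i}|_n}\| \leq \|A_{\mathbf{i}|_n}|E(\sigma^n\mathbf{i})\| \leq \|A_{\mathbf{i}|_n}\|$. Then for every $\alpha \in \mathbb{R}$ and every $t \geq 0$, the set $\{\mathbf{i}\in\Sigma : \liminf_{m\to\infty} \log\|A_{\mathbf{i}|_m}\| / \log\lambda_{\mathbf{i}|_m} \leq \alpha\}$ has Hausdorff dimension (with respect to the metric $d(\mathbf{i},\mathbf{j}) = \lambda_{\mathbf{i}|_{\mathbf{i}\wedge\mathbf{j}}}$) at most $t\alpha - P(t)$. -/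

import Mathlib

open Matrix Filter MeasureTheory Set Classical

/-- The product `A_{i₁} ⋯ A_{i_n}` of the first `n` matrices along `𝐢`. -/
noncomputable def prefixProd {d N : ℕ} (A : Fin N → Matrix (Fin d) (Fin d) ℝ)
    (i : ℕ → Fin N) (n : ℕ) : Matrix (Fin d) (Fin d) ℝ :=
  (List.ofFn fun k : Fin n => A (i k)).prod

/-- Operator norm of a matrix acting on Euclidean space. -/
noncomputable def opN {d : ℕ} (A : Matrix (Fin d) (Fin d) ℝ) : ℝ :=
  ‖(LinearMap.toContinuousLinearMap
      (Matrix.toEuclideanLin A : EuclideanSpace ℝ (Fin d) →ₗ[ℝ] EuclideanSpace ℝ (Fin d)))‖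

/-- The norm of `A` restricted to a subspace `θ`; for one-dimensional `θ = ⟨v⟩` this is
`‖A v‖ / ‖v‖`. -/
noncomputable def restrNorm {d : ℕ} (A : Matrix (Fin d) (Fin d) ℝ)
    (θ : Submodule ℝ (Fin d → ℝ)) : ℝ :=
  sSup {r : ℝ | ∃ v ∈ θ, v ≠ 0 ∧ r = ‖A.mulVec v‖ / ‖v‖}

/-- The shift `σ^k`. -/
def shiftk {N : ℕ} (k : ℕ) (i : ℕ → Fin N) : ℕ → Fin N := fun m => i (m + k)

/-- Length of the longest common prefix of two distinct sequences. -/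
noncomputable def wedge {N : ℕ} (i j : ℕ → Fin N) : ℕ := sInf {n | i n ≠ j n}

/-! ### Auxiliary lemmas -/

noncomputable def matCLM {d : ℕ} (A : Matrix (Fin d) (Fin d) ℝ) :
    EuclideanSpace ℝ (Fin d) →L[ℝ] EuclideanSpace ℝ (Fin d) :=
  LinearMap.toContinuousLinearMap
      (Matrix.toEuclideanLin A : EuclideanSpace ℝ (Fin d) →ₗ[ℝ] EuclideanSpace ℝ (Fin d))

lemma opN_eq {d : ℕ} (A : Matrix (Fin d) (Fin d) ℝ) : opN A = ‖matCLM A‖ := rfl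

lemma matCLM_mul {d : ℕ} (M M' : Matrix (Fin d) (Fin d) ℝ) :
    matCLM (M * M') = (matCLM M).comp (matCLM M') := by
  ext v
  simp [matCLM, Matrix.toEuclideanLin_apply, Matrix.mulVec_mulVec]

lemma opN_nonneg {d : ℕ} (M : Matrix (Fin d) (Fin d) ℝ) : 0 ≤ opN M := norm_nonneg _

lemma opN_mul_le {d : ℕ} (M M' : Matrix (Fin d) (Fin d) ℝ) :
    opN (M * M') ≤ opN M * opN M' := by
  rw [opN_eq, opN_eq, opN_eq, matCLM_mul]
  exact ContinuousLinearMap.opNorm_comp_le _ _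

lemma opN_one {d : ℕ} (hd : 0 < d) : opN (1 : Matrix (Fin d) (Fin d) ℝ) = 1 := by
  haveI : Nonempty (Fin d) := ⟨⟨0, hd⟩⟩
  haveI : Nontrivial (EuclideanSpace ℝ (Fin d)) := inferInstance
  have h : matCLM (1 : Matrix (Fin d) (Fin d) ℝ) = ContinuousLinearMap.id ℝ _ := by
    ext v
    simp [matCLM, Matrix.toEuclideanLin_apply]
  rw [opN_eq, h]
  exact ContinuousLinearMap.norm_id

lemma one_le_opN_mul_opN_inv {d : ℕ} (hd : 0 < d) {M : Matrix (Fin d) (Fin d) ℝ}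
    (h : IsUnit M) : 1 ≤ opN M * opN M⁻¹ := by
  have hdet : IsUnit M.det := (Matrix.isUnit_iff_isUnit_det M).mp h
  have := opN_mul_le M M⁻¹
  rwa [Matrix.mul_nonsing_inv M hdet, opN_one hd] at this

lemma opN_pos {d : ℕ} (hd : 0 < d) {M : Matrix (Fin d) (Fin d) ℝ} (h : IsUnit M) :
    0 < opN M := by
  rcases lt_or_eq_of_le (opN_nonneg M) with h' | h'
  · exact h'
  · exfalso
    have := one_le_opN_mul_opN_inv hd h
    rw [← h', zero_mul] at this
    linarith

lemma prefixProd_zero {d N : ℕ} (A : Fin N → Matrix (Fin d) (Fin d) ℝ) (i : ℕ → Fin N) :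
    prefixProd A i 0 = 1 := by simp [prefixProd]

lemma prefixProd_succ {d N : ℕ} (A : Fin N → Matrix (Fin d) (Fin d) ℝ) (i : ℕ → Fin N) (n : ℕ) :
    prefixProd A i (n + 1) = prefixProd A i n * A (i n) := by
  unfold prefixProd
  rw [List.ofFn_succ']
  simp

lemma isUnit_prefixProd {d N : ℕ} {A : Fin N → Matrix (Fin d) (Fin d) ℝ}
    (hinv : ∀ k, IsUnit (A k)) (i : ℕ → Fin N) (n : ℕ) :
    IsUnit (prefixProd A i n) := by
  induction n with
  | zero => simp [prefixProd_zero]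
  | succ n ih => rw [prefixProd_succ]; exact ih.mul (hinv _)

lemma prefixProd_congr {d N : ℕ} (A : Fin N → Matrix (Fin d) (Fin d) ℝ)
    {i j : ℕ → Fin N} {n : ℕ} (h : ∀ k < n, i k = j k) :
    prefixProd A i n = prefixProd A j n := by
  unfold prefixProd
  congr 1
  congr 1
  funext k
  rw [h k k.isLt]

lemma opN_prefixProd_le {d N : ℕ} {A : Fin N → Matrix (Fin d) (Fin d) ℝ} {Mx : ℝ}
    (hMx : ∀ k, opN (A k) ≤ Mx) (hMx0 : 0 ≤ Mx) (i : ℕ → Fin N) (n : ℕ) (hd : 0 < d) :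
    opN (prefixProd A i n) ≤ Mx ^ n := by
  induction n with
  | zero => simp [prefixProd_zero, opN_one hd]
  | succ n ih =>
    rw [prefixProd_succ, pow_succ]
    calc opN (prefixProd A i n * A (i n)) ≤ opN (prefixProd A i n) * opN (A (i n)) :=
          opN_mul_le _ _
    _ ≤ Mx ^ n * Mx := mul_le_mul ih (hMx _) (opN_nonneg _) (by positivity)

lemma one_le_pow_mul_opN_prefixProd {d N : ℕ} (hd : 0 < d)
    {A : Fin N → Matrix (Fin d) (Fin d) ℝ} (hinv : ∀ k, IsUnit (A k)) {K : ℝ}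
    (hK : ∀ k, opN (A k)⁻¹ ≤ K) (hK0 : 0 ≤ K) (i : ℕ → Fin N) (n : ℕ) :
    1 ≤ K ^ n * opN (prefixProd A i n) := by
  induction n with
  | zero => simp [prefixProd_zero, opN_one hd]
  | succ n ih =>
    have hpp : prefixProd A i n = prefixProd A i (n + 1) * (A (i n))⁻¹ := by
      rw [prefixProd_succ, mul_assoc,
        Matrix.mul_nonsing_inv _ ((Matrix.isUnit_iff_isUnit_det _).mp (hinv (i n))), mul_one]
    have h1 : opN (prefixProd A i n) ≤ opN (prefixProd A i (n + 1)) * K := by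
      rw [hpp]
      calc opN (prefixProd A i (n+1) * (A (i n))⁻¹)
          ≤ opN (prefixProd A i (n+1)) * opN (A (i n))⁻¹ := opN_mul_le _ _
      _ ≤ opN (prefixProd A i (n+1)) * K :=
          mul_le_mul_of_nonneg_left (hK _) (opN_nonneg _)
    calc (1:ℝ) ≤ K ^ n * opN (prefixProd A i n) := ih
    _ ≤ K ^ n * (opN (prefixProd A i (n+1)) * K) :=
        mul_le_mul_of_nonneg_left h1 (by positivity)
    _ = K ^ (n+1) * opN (prefixProd A i (n+1)) := by ring

lemma wedge_spec {N : ℕ} {i j : ℕ → Fin N} (h : i ≠ j) : i (wedge i j) ≠ j (wedge i j) :=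
  Nat.sInf_mem (Function.ne_iff.mp h)

lemma le_wedge {N : ℕ} {i j : ℕ → Fin N} {n : ℕ} (h : i ≠ j) (hag : ∀ k < n, i k = j k) :
    n ≤ wedge i j := by
  by_contra hlt
  push_neg at hlt
  exact wedge_spec h (hag _ hlt)

/-- extension of a word to a sequence -/
def extw {N : ℕ} (hN : 0 < N) (w : List (Fin N)) : ℕ → Fin N := fun k => w.getD k ⟨0, hN⟩

lemma extw_take {N : ℕ} (hN : 0 < N) (i : ℕ → Fin N) (l : ℕ) {k : ℕ} (hk : k < l) :
    extw hN (List.ofFn fun s : Fin l => i s) k = i k := by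
  simp [extw, List.getD, List.getElem?_ofFn, hk]

section Words
variable {N : ℕ} (hN : 0 < N) (g : (ℕ → Fin N) → ℕ → Prop)
  (gcong : ∀ (i j : ℕ → Fin N) (n : ℕ), (∀ k < n, i k = j k) → g i n → g j n)

include gcong

/-- minimal good words at scale n -/
def Wn (n : ℕ) : Set (List (Fin N)) :=
  {w | n ≤ w.length ∧ g (extw hN w) w.length ∧
    ∀ l, n ≤ l → l < w.length → ¬ g (extw hN w) l}

lemma Wn_cover {i : ℕ → Fin N} (hi : ∀ n₀, ∃ n' , n₀ ≤ n' ∧ g i n') (n : ℕ) :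
    ∃ w ∈ Wn hN g n, ∀ k < w.length, i k = extw hN w k := by
  have hex : ∃ l, n ≤ l ∧ g i l := hi n
  classical
  set l := Nat.find hex with hl
  obtain ⟨hln, hgl⟩ := Nat.find_spec hex
  refine ⟨List.ofFn fun s : Fin l => i s, ⟨?_, ?_, ?_⟩, ?_⟩
  · rw [List.length_ofFn]; exact hln
  · rw [List.length_ofFn]
    exact gcong i _ l (fun k hk => (extw_take hN i l hk).symm) hgl
  · intro l' hnl' hl'
    rw [List.length_ofFn] at hl'
    intro hg'
    have : g i l' := gcong _ i l' (fun k hk => extw_take hN i l (hk.trans hl')) hg'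
    exact (Nat.find_min hex hl') ⟨hnl', this⟩
  · intro k hk
    rw [List.length_ofFn] at hk
    exact (extw_take hN i l hk).symm

lemma Wn_disjoint_aux {n : ℕ} {w₁ w₂ : List (Fin N)} (h1 : w₁ ∈ Wn hN g n)
    (h2 : w₂ ∈ Wn hN g n) (hle : w₁.length ≤ w₂.length)
    {x : ℕ → Fin N} (hx1 : ∀ k < w₁.length, x k = extw hN w₁ k)
    (hx2 : ∀ k < w₂.length, x k = extw hN w₂ k) : w₁ = w₂ := by
  obtain ⟨hn1, hg1, _⟩ := h1
  obtain ⟨hn2, hg2, hmin2⟩ := h2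
  have hagree : ∀ k < w₁.length, extw hN w₁ k = extw hN w₂ k := fun k hk =>
    (hx1 k hk).symm.trans (hx2 k (hk.trans_le hle))
  have hlen : w₁.length = w₂.length := by
    by_contra hne
    have hlt : w₁.length < w₂.length := lt_of_le_of_ne hle hne
    exact hmin2 w₁.length hn1 hlt (gcong _ _ _ hagree hg1)
  apply List.ext_getElem hlen
  intro k hk1 hk2
  have := hagree k hk1
  simpa [extw, List.getD, List.getElem?_eq_getElem, hk1, hk2] using this

lemma Wn_disjoint {n : ℕ} {w₁ w₂ : List (Fin N)} (h1 : w₁ ∈ Wn hN g n)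
    (h2 : w₂ ∈ Wn hN g n)
    {x : ℕ → Fin N} (hx1 : ∀ k < w₁.length, x k = extw hN w₁ k)
    (hx2 : ∀ k < w₂.length, x k = extw hN w₂ k) : w₁ = w₂ := by
  rcases le_total w₁.length w₂.length with h | h
  · exact Wn_disjoint_aux hN g gcong h1 h2 h hx1 hx2
  · exact (Wn_disjoint_aux hN g gcong h2 h1 h hx2 hx1).symm

end Words

lemma diam_cyl {N : ℕ} [m : MetricSpace (ℕ → Fin N)] {lam : Fin N → ℝ}
    (hpos : ∀ i, 0 < lam i) (hlt1 : ∀ i, lam i < 1)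
    (hdist : ∀ i j : ℕ → Fin N, i ≠ j →
      dist i j = ∏ k ∈ Finset.range (wedge i j), lam (i k))
    (i : ℕ → Fin N) (n : ℕ) :
    EMetric.diam {j : ℕ → Fin N | ∀ k < n, j k = i k}
      ≤ ENNReal.ofReal (∏ k ∈ Finset.range n, lam (i k)) := by
  apply EMetric.diam_le
  intro x hx y hy
  rcases eq_or_ne x y with rfl | hxy
  · simp
  · rw [edist_dist]
    apply ENNReal.ofReal_le_ofReal
    rw [hdist x y hxy]
    have hag : ∀ k < n, x k = y k := fun k hk => (hx k hk).trans (hy k hk).symm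
    have hw : n ≤ wedge x y := le_wedge hxy hag
    rw [← Finset.prod_range_mul_prod_Ico (fun k => lam (x k)) hw]
    have h1 : ∏ k ∈ Finset.range n, lam (x k) = ∏ k ∈ Finset.range n, lam (i k) :=
      Finset.prod_congr rfl fun k hk => by rw [hx k (Finset.mem_range.mp hk)]
    rw [h1]
    have h2 : ∏ k ∈ Finset.Ico n (wedge x y), lam (x k) ≤ 1 :=
      Finset.prod_le_one (fun k _ => (hpos _).le) (fun k _ => (hlt1 _).le)
    have h3 : 0 ≤ ∏ k ∈ Finset.range n, lam (i k) :=
      Finset.prod_nonneg fun k _ => (hpos _).le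
    nlinarith [Finset.prod_nonneg (fun k (_ : k ∈ Finset.Ico n (wedge x y)) => (hpos (x k)).le)]

lemma measurable_cyl {N : ℕ} (i : ℕ → Fin N) (n : ℕ) :
    MeasurableSet {j : ℕ → Fin N | ∀ k < n, j k = i k} := by
  have : {j : ℕ → Fin N | ∀ k < n, j k = i k}
      = ⋂ k ∈ Finset.range n, (fun j : ℕ → Fin N => j k) ⁻¹' {i k} := by
    ext j; simp
  rw [this]
  exact MeasurableSet.biInter (Finset.range n).countable_toSet
    (fun k _ => (measurable_pi_apply k) (measurableSet_singleton _))

/-- Let `μ_t` be Gibbs measures for the potentials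
`φ_t(𝐢) = log(‖A_{i₁}|E(σ𝐢)‖ᵗ λ_{i₁}^{-P(t)})`, and assume
`C'‖A_{𝐢|n}‖ ≤ ‖A_{𝐢|n}|E(σⁿ𝐢)‖ ≤ ‖A_{𝐢|n}‖`. Then, with respect to the metric
`d(𝐢,𝐣) = λ_{𝐢|_{𝐢∧𝐣}}`, for every `α ∈ ℝ` and `t ≥ 0` the set
`{𝐢 : liminf_m log‖A_{𝐢|m}‖ / log λ_{𝐢|m} ≤ α}` has Hausdorff dimension at most
`tα - P(t)`. -/
theorem stmt5 {d N : ℕ} (hN : 2 ≤ N)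
    (lam : Fin N → ℝ) (hpos : ∀ i, 0 < lam i) (hsum : ∑ i, lam i = 1)
    (A : Fin N → Matrix (Fin d) (Fin d) ℝ) (hinv : ∀ i, IsUnit (A i))
    (hcontr : ∀ i, opN (A i) < 1)
    (E : (ℕ → Fin N) → Submodule ℝ (Fin d → ℝ))
    (hline : ∀ i, ∃ v : Fin d → ℝ, v ≠ 0 ∧ E i = Submodule.span ℝ {v})
    (hequi : ∀ i : ℕ → Fin N,
      E i = (E (shiftk 1 i)).map (Matrix.mulVecLin (A (i 0))))
    (m : MetricSpace (ℕ → Fin N))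
    (hdist : ∀ i j : ℕ → Fin N, i ≠ j →
      m.toDist.dist i j = ∏ k ∈ Finset.range (wedge i j), lam (i k))
    (P : ℝ → ℝ) (μ : ℝ → Measure (ℕ → Fin N))
    (hprob : ∀ t, IsProbabilityMeasure (μ t))
    (hgibbs : ∀ t : ℝ, ∃ C : ℝ, 1 < C ∧ ∀ (i : ℕ → Fin N) (n : ℕ),
      C⁻¹ * ((restrNorm (prefixProd A i n) (E (shiftk n i))) ^ t
              * (∏ k ∈ Finset.range n, lam (i k)) ^ (-(P t)))
        ≤ (μ t {j : ℕ → Fin N | ∀ k < n, j k = i k}).toReal ∧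
      (μ t {j : ℕ → Fin N | ∀ k < n, j k = i k}).toReal
        ≤ C * ((restrNorm (prefixProd A i n) (E (shiftk n i))) ^ t
              * (∏ k ∈ Finset.range n, lam (i k)) ^ (-(P t))))
    (hcomp : ∃ C' : ℝ, 0 < C' ∧ ∀ (i : ℕ → Fin N) (n : ℕ),
      C' * opN (prefixProd A i n) ≤ restrNorm (prefixProd A i n) (E (shiftk n i)) ∧
      restrNorm (prefixProd A i n) (E (shiftk n i)) ≤ opN (prefixProd A i n)) :
    ∀ (α t : ℝ), 0 ≤ t →
      @dimH _ (@MetricSpace.toEMetricSpace _ m)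
        {i : ℕ → Fin N |
          liminf (fun n : ℕ => Real.log (opN (prefixProd A i n))
              / Real.log (∏ k ∈ Finset.range n, lam (i k))) atTop ≤ α}
        ≤ ENNReal.ofReal (t * α - P t) := by
  intro α t ht
  -- basic constants
  have hNpos : 0 < N := by omega
  have hd : 0 < d := by
    by_contra hd0
    push_neg at hd0
    interval_cases d
    obtain ⟨v, hv, -⟩ := hline (fun _ => ⟨0, hNpos⟩)
    exact hv (funext fun x => absurd x.2 (Nat.not_lt_zero _))
  obtain ⟨C, hC1, hg⟩ := hgibbs t
  obtain ⟨C', hC'pos, hcmp⟩ := hcomp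
  haveI := hprob t
  -- each lam is < 1
  have hlt1 : ∀ k, lam k < 1 := by
    intro k
    have hk2 : ∃ k' : Fin N, k' ≠ k := by
      rcases eq_or_ne k ⟨0, hNpos⟩ with h | h
      · refine ⟨⟨1, by omega⟩, ?_⟩
        rw [h]
        simp [Fin.ext_iff]
      · exact ⟨⟨0, hNpos⟩, Ne.symm h⟩
    obtain ⟨k', hk'⟩ := hk2
    calc lam k < ∑ j, lam j := Finset.single_lt_sum hk' (Finset.mem_univ k)
          (Finset.mem_univ k') (hpos k') (fun j _ _ => (hpos j).le)
    _ = 1 := hsum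
  haveI : Nonempty (Fin N) := ⟨⟨0, hNpos⟩⟩
  -- cmax
  set cmax : ℝ := Finset.univ.sup' Finset.univ_nonempty lam with hcmaxdef
  have hlamle : ∀ k, lam k ≤ cmax := fun k => Finset.le_sup' lam (Finset.mem_univ k)
  have hcmax1 : cmax < 1 := by
    rw [hcmaxdef, Finset.sup'_lt_iff]
    exact fun k _ => hlt1 k
  have hcmax0 : 0 < cmax := lt_of_lt_of_le (hpos ⟨0, hNpos⟩) (hlamle _)
  -- K (bound on inverse norms)
  set K : ℝ := Finset.univ.sup' Finset.univ_nonempty (fun k => opN (A k)⁻¹) with hKdef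
  have hKle : ∀ k, opN (A k)⁻¹ ≤ K := fun k =>
    Finset.le_sup' (fun k => opN (A k)⁻¹) (Finset.mem_univ k)
  have hK1 : 1 < K := by
    have h0 := one_le_opN_mul_opN_inv hd (hinv ⟨0, hNpos⟩)
    have h1 := hcontr ⟨0, hNpos⟩
    have h2 := opN_nonneg (A ⟨0, hNpos⟩)
    have h3 : 1 < opN (A ⟨0, hNpos⟩)⁻¹ := by nlinarith
    exact h3.trans_le (hKle _)
  -- Mmax (bound on norms)
  set Mx : ℝ := Finset.univ.sup' Finset.univ_nonempty (fun k => opN (A k)) with hMxdef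
  have hMxle : ∀ k, opN (A k) ≤ Mx := fun k =>
    Finset.le_sup' (fun k => opN (A k)) (Finset.mem_univ k)
  have hMx1 : Mx < 1 := by
    rw [hMxdef, Finset.sup'_lt_iff]
    exact fun k _ => hcontr k
  have hMx0 : 0 ≤ Mx := (opN_nonneg _).trans (hMxle ⟨0, hNpos⟩)
  -- positivity facts
  have hLpos : ∀ (i : ℕ → Fin N) (n : ℕ), 0 < ∏ k ∈ Finset.range n, lam (i k) :=
    fun i n => Finset.prod_pos fun k _ => hpos _
  have hLle : ∀ (i : ℕ → Fin N) (n : ℕ), (∏ k ∈ Finset.range n, lam (i k)) ≤ cmax ^ n := by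
    intro i n
    calc (∏ k ∈ Finset.range n, lam (i k)) ≤ ∏ k ∈ Finset.range n, cmax :=
        Finset.prod_le_prod (fun k _ => (hpos _).le) (fun k _ => hlamle _)
    _ = cmax ^ n := by rw [Finset.prod_const, Finset.card_range]
  have hOpos : ∀ (i : ℕ → Fin N) (n : ℕ), 0 < opN (prefixProd A i n) :=
    fun i n => opN_pos hd (isUnit_prefixProd hinv i n)
  -- the metric space and Borel structure
  letI : MetricSpace (ℕ → Fin N) := m
  letI tX : TopologicalSpace (ℕ → Fin N) :=
    @UniformSpace.toTopologicalSpace _ (@PseudoEMetricSpace.toUniformSpace _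
      (@EMetricSpace.toPseudoEMetricSpace _ (@MetricSpace.toEMetricSpace _ m)))
  letI mX : MeasurableSpace (ℕ → Fin N) := @borel _ tX
  haveI : @BorelSpace _ tX mX := ⟨rfl⟩
  apply dimH_le
  intro d' hd'
  by_contra hcon
  push_neg at hcon
  -- real inequalities from hcon
  have hcon' : (t * α - P t).toNNReal < d' := by
    rwa [ENNReal.ofReal, ENNReal.coe_lt_coe] at hcon
  have h0d' : (0:ℝ) < (d' : ℝ) := by
    have := (t * α - P t).toNNReal.2
    exact lt_of_le_of_lt this (NNReal.coe_lt_coe.mpr hcon')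
  have hαd : t * α - P t < (d' : ℝ) :=
    lt_of_le_of_lt (Real.le_coe_toNNReal _) (NNReal.coe_lt_coe.mpr hcon')
  set ε : ℝ := ((d' : ℝ) - (t * α - P t)) / (2 * (t + 1)) with hεdef
  have hεpos : 0 < ε := by
    apply div_pos (by linarith) (by linarith)
  set s₀ : ℝ := t * (α + ε) - P t with hs₀def
  have hs₀lt : s₀ < (d' : ℝ) := by
    have h1 : t * ε ≤ (t + 1) * ε := by nlinarith
    have h2 : (t + 1) * ε = ((d' : ℝ) - (t * α - P t)) / 2 := by
      rw [hεdef]; field_simp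
    have : t * (α + ε) = t * α + t * ε := by ring
    nlinarith
  -- the goodness predicate
  set g : (ℕ → Fin N) → ℕ → Prop := fun i n =>
    1 ≤ n ∧ (∏ k ∈ Finset.range n, lam (i k)) ^ (α + ε) ≤ opN (prefixProd A i n)
    with hgdef
  have gcong : ∀ (i j : ℕ → Fin N) (n : ℕ), (∀ k < n, i k = j k) → g i n → g j n := by
    intro i j n hag ⟨h1, h2⟩
    refine ⟨h1, ?_⟩
    have e1 : (∏ k ∈ Finset.range n, lam (j k)) = ∏ k ∈ Finset.range n, lam (i k) :=
      Finset.prod_congr rfl fun k hk => by rw [hag k (Finset.mem_range.mp hk)]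
    rw [e1, ← prefixProd_congr A hag]
    exact h2
  -- frequent goodness on the target set
  set Aset : Set (ℕ → Fin N) :=
    {i : ℕ → Fin N |
      liminf (fun n : ℕ => Real.log (opN (prefixProd A i n))
          / Real.log (∏ k ∈ Finset.range n, lam (i k))) atTop ≤ α} with hAdef
  have hfreq : ∀ i ∈ Aset, ∀ n₀ : ℕ, ∃ n', n₀ ≤ n' ∧ g i n' := by
    intro i hi n₀
    set u : ℕ → ℝ := fun n => Real.log (opN (prefixProd A i n))
        / Real.log (∏ k ∈ Finset.range n, lam (i k)) with hudef
    set B : ℝ := Real.log K / (-Real.log cmax) with hBdef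
    have hlogcmax : Real.log cmax < 0 := Real.log_neg hcmax0 hcmax1
    have hub : ∀ n, 1 ≤ n → u n ≤ B := by
      intro n hn
      set L : ℝ := ∏ k ∈ Finset.range n, lam (i k) with hLdef
      set o : ℝ := opN (prefixProd A i n) with hodef
      have hLp : 0 < L := hLpos i n
      have hL1 : L < 1 := by
        have := hLle i n
        have h2 : cmax ^ n ≤ cmax := pow_le_of_le_one hcmax0.le hcmax1.le (by omega)
        linarith
      have hlogL : Real.log L < 0 := Real.log_neg hLp hL1
      have hKn : (0:ℝ) < K ^ n := pow_pos (by linarith) n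
      have ho_lb : (K ^ n)⁻¹ ≤ o := by
        have h := one_le_pow_mul_opN_prefixProd hd hinv hKle (by linarith) i n
        calc (K ^ n)⁻¹ = (K ^ n)⁻¹ * 1 := (mul_one _).symm
        _ ≤ (K ^ n)⁻¹ * (K ^ n * o) := mul_le_mul_of_nonneg_left h (by positivity)
        _ = o := by field_simp
      have hlogo : -((n:ℝ) * Real.log K) ≤ Real.log o := by
        calc -((n:ℝ) * Real.log K) = Real.log ((K ^ n)⁻¹) := by
              rw [Real.log_inv, Real.log_pow]
        _ ≤ Real.log o := Real.log_le_log (by positivity) ho_lb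
      have hlogL_le : Real.log L ≤ (n:ℝ) * Real.log cmax := by
        calc Real.log L ≤ Real.log (cmax ^ n) := Real.log_le_log hLp (hLle i n)
        _ = (n:ℝ) * Real.log cmax := Real.log_pow cmax n
      have hBnn : 0 ≤ B := div_nonneg (Real.log_nonneg hK1.le) (by linarith)
      show Real.log o / Real.log L ≤ B
      rw [div_le_iff_of_neg hlogL]
      have hBlog : B * ((n:ℝ) * Real.log cmax) = -((n:ℝ) * Real.log K) := by
        have h0 : Real.log cmax ≠ 0 := ne_of_lt hlogcmax
        rw [hBdef, div_mul_eq_mul_div, div_eq_iff (neg_ne_zero.mpr h0)]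
        ring
      calc B * Real.log L ≤ B * ((n:ℝ) * Real.log cmax) :=
            mul_le_mul_of_nonneg_left hlogL_le hBnn
      _ = -((n:ℝ) * Real.log K) := hBlog
      _ ≤ Real.log o := hlogo
    have hcobdd : IsCoboundedUnder (· ≥ ·) atTop u :=
      isCoboundedUnder_ge_of_eventually_le atTop
        ((eventually_ge_atTop 1).mono fun n hn => hub n hn)
    have hliminf : liminf u atTop < α + ε := lt_of_le_of_lt hi (by linarith)
    have hfr : ∃ᶠ n in atTop, u n < α + ε := frequently_lt_of_liminf_lt hcobdd hliminf
    obtain ⟨n', hn'⟩ := (hfr.and_eventually (eventually_ge_atTop (max n₀ 1))).exists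
    obtain ⟨hun', hge⟩ := hn'
    refine ⟨n', le_trans (le_max_left _ _) hge, ?_, ?_⟩
    · exact le_trans (le_max_right _ _) hge
    · -- turn u n' < α + ε into the rpow inequality
      set L : ℝ := ∏ k ∈ Finset.range n', lam (i k) with hLdef
      set o : ℝ := opN (prefixProd A i n') with hodef
      have hLp : 0 < L := hLpos i n'
      have hL1 : L < 1 := by
        have := hLle i n'
        have h2 : cmax ^ n' ≤ cmax := pow_le_of_le_one hcmax0.le hcmax1.le
          (by have : 1 ≤ n' := le_trans (le_max_right _ _) hge; omega)
        linarith
      have hlogL : Real.log L < 0 := Real.log_neg hLp hL1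
      have hop : 0 < o := hOpos i n'
      have h1 : (α + ε) * Real.log L < Real.log o :=
        (div_lt_iff_of_neg hlogL).mp hun'
      have h2 : Real.log (L ^ (α + ε)) < Real.log o := by
        rwa [Real.log_rpow hLp]
      exact ((Real.log_lt_log_iff (Real.rpow_pos_of_pos hLp _) hop).mp h2).le
  -- lower bound for the measure of good cylinders
  set c₀ : ℝ := C⁻¹ * C' ^ t with hc₀def
  have hc₀pos : 0 < c₀ := by
    apply mul_pos (inv_pos.mpr (by linarith)) (Real.rpow_pos_of_pos hC'pos t)
  have hmeas_lb : ∀ (i : ℕ → Fin N) (n : ℕ), g i n →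
      ENNReal.ofReal (c₀ * (∏ k ∈ Finset.range n, lam (i k)) ^ s₀)
        ≤ μ t {j : ℕ → Fin N | ∀ k < n, j k = i k} := by
    intro i n ⟨hn1, hgood⟩
    set L : ℝ := ∏ k ∈ Finset.range n, lam (i k) with hLdef
    have hLp : 0 < L := hLpos i n
    have hop : 0 < opN (prefixProd A i n) := hOpos i n
    have hrestr : C' * L ^ (α + ε) ≤ restrNorm (prefixProd A i n) (E (shiftk n i)) := by
      calc C' * L ^ (α + ε) ≤ C' * opN (prefixProd A i n) :=
            mul_le_mul_of_nonneg_left hgood hC'pos.le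
      _ ≤ _ := (hcmp i n).1
    have hrt : (C' * L ^ (α + ε)) ^ t
        ≤ restrNorm (prefixProd A i n) (E (shiftk n i)) ^ t :=
      Real.rpow_le_rpow (by positivity) hrestr ht
    have he1 : (C' * L ^ (α + ε)) ^ t = C' ^ t * L ^ ((α + ε) * t) := by
      rw [Real.mul_rpow hC'pos.le (Real.rpow_pos_of_pos hLp _).le, ← Real.rpow_mul hLp.le]
    have hkey : c₀ * L ^ s₀ ≤ C⁻¹ *
        (restrNorm (prefixProd A i n) (E (shiftk n i)) ^ t * L ^ (-(P t))) := by
      have hLPt : (0:ℝ) < L ^ (-(P t)) := Real.rpow_pos_of_pos hLp _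
      have h2 : C' ^ t * L ^ ((α + ε) * t) * L ^ (-(P t))
          ≤ restrNorm (prefixProd A i n) (E (shiftk n i)) ^ t * L ^ (-(P t)) := by
        apply mul_le_mul_of_nonneg_right _ hLPt.le
        rw [← he1]; exact hrt
      have h3 : c₀ * L ^ s₀ = C⁻¹ * (C' ^ t * L ^ ((α + ε) * t) * L ^ (-(P t))) := by
        rw [hc₀def, hs₀def]
        have : t * (α + ε) - P t = (α + ε) * t + (-(P t)) := by ring
        rw [this, Real.rpow_add hLp]
        ring
      rw [h3]
      exact mul_le_mul_of_nonneg_left h2 (by positivity)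
    have hμ := (hg i n).1
    have : c₀ * L ^ s₀ ≤ (μ t {j : ℕ → Fin N | ∀ k < n, j k = i k}).toReal :=
      le_trans hkey hμ
    calc ENNReal.ofReal (c₀ * L ^ s₀)
        ≤ ENNReal.ofReal ((μ t {j : ℕ → Fin N | ∀ k < n, j k = i k}).toReal) :=
          ENNReal.ofReal_le_ofReal this
    _ = μ t {j : ℕ → Fin N | ∀ k < n, j k = i k} :=
          ENNReal.ofReal_toReal (measure_ne_top _ _)
  -- the covering families
  set fam : ℕ → List (Fin N) → Set (ℕ → Fin N) := fun n w =>
    if w ∈ Wn hNpos g n then {j : ℕ → Fin N | ∀ k < w.length, j k = extw hNpos w k}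
    else ∅ with hfamdef
  -- cover property
  have hcover : ∀ n : ℕ, Aset ⊆ ⋃ w : List (Fin N), fam n w := by
    intro n i hi
    obtain ⟨w, hw, hag⟩ := Wn_cover hNpos g gcong (hfreq i hi) n
    refine mem_iUnion.mpr ⟨w, ?_⟩
    rw [hfamdef]
    simp only [if_pos hw]
    exact fun k hk => hag k hk
  -- diameter bound
  have hdiam : ∀ (n : ℕ) (w : List (Fin N)),
      EMetric.diam (fam n w) ≤ ENNReal.ofReal (cmax ^ n) := by
    intro n w
    rw [hfamdef]
    by_cases hw : w ∈ Wn hNpos g n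
    · simp only [if_pos hw]
      calc EMetric.diam {j : ℕ → Fin N | ∀ k < w.length, j k = extw hNpos w k}
          ≤ ENNReal.ofReal (∏ k ∈ Finset.range w.length, lam (extw hNpos w k)) :=
            diam_cyl hpos hlt1 hdist _ _
      _ ≤ ENNReal.ofReal (cmax ^ n) := by
          apply ENNReal.ofReal_le_ofReal
          calc (∏ k ∈ Finset.range w.length, lam (extw hNpos w k))
              ≤ cmax ^ w.length := hLle _ _
          _ ≤ cmax ^ n := pow_le_pow_of_le_one hcmax0.le hcmax1.le hw.1
    · simp only [if_neg hw, EMetric.diam, Metric.ediam_empty]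
      exact zero_le
  -- disjointness and measure sum
  have hdisj : ∀ n : ℕ, Pairwise (Function.onFun Disjoint (fam n)) := by
    intro n w₁ w₂ hne
    rw [Function.onFun, Set.disjoint_left]
    intro x hx1 hx2
    rw [hfamdef] at hx1 hx2
    by_cases h1 : w₁ ∈ Wn hNpos g n
    · by_cases h2 : w₂ ∈ Wn hNpos g n
      · simp only [if_pos h1] at hx1
        simp only [if_pos h2] at hx2
        exact hne (Wn_disjoint hNpos g gcong h1 h2 hx1 hx2)
      · simp only [if_neg h2] at hx2; exact hx2
    · simp only [if_neg h1] at hx1; exact hx1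
  have hmeas : ∀ (n : ℕ) (w : List (Fin N)), MeasurableSet[MeasurableSpace.pi] (fam n w) := by
    intro n w
    rw [hfamdef]
    by_cases hw : w ∈ Wn hNpos g n
    · simp only [if_pos hw]; exact measurable_cyl _ _
    · simp only [if_neg hw]; exact @MeasurableSet.empty _ MeasurableSpace.pi
  have hsum_le_one : ∀ n : ℕ, (∑' w : List (Fin N), μ t (fam n w)) ≤ 1 := by
    intro n
    rw [← measure_iUnion (μ := μ t) (hdisj n) (hmeas n)]
    exact prob_le_one
  -- the tsum bound
  have htsum : ∀ n : ℕ, (∑' w : List (Fin N), EMetric.diam (fam n w) ^ (d' : ℝ))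
      ≤ ENNReal.ofReal ((cmax ^ n) ^ ((d' : ℝ) - s₀) * c₀⁻¹) := by
    intro n
    have hterm : ∀ w : List (Fin N), EMetric.diam (fam n w) ^ (d' : ℝ)
        ≤ ENNReal.ofReal ((cmax ^ n) ^ ((d' : ℝ) - s₀) * c₀⁻¹) * μ t (fam n w) := by
      intro w
      by_cases hw : w ∈ Wn hNpos g n
      · set L : ℝ := ∏ k ∈ Finset.range w.length, lam (extw hNpos w k) with hLdef
        have hLp : 0 < L := hLpos _ _
        have hLles : L ≤ cmax ^ n :=
          (hLle _ _).trans (pow_le_pow_of_le_one hcmax0.le hcmax1.le hw.1)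
        have hstep1 : EMetric.diam (fam n w) ^ (d' : ℝ) ≤ ENNReal.ofReal (L ^ (d' : ℝ)) := by
          rw [← ENNReal.ofReal_rpow_of_pos hLp]
          apply ENNReal.rpow_le_rpow _ h0d'.le
          rw [hfamdef]
          simp only [if_pos hw]
          exact diam_cyl hpos hlt1 hdist _ _
        have hstep2 : L ^ (d' : ℝ) ≤ (cmax ^ n) ^ ((d' : ℝ) - s₀) * c₀⁻¹ * (c₀ * L ^ s₀) := by
          have e1 : L ^ (d' : ℝ) = L ^ ((d' : ℝ) - s₀) * L ^ s₀ := by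
            rw [← Real.rpow_add hLp]; ring_nf
          have e2 : L ^ ((d' : ℝ) - s₀) ≤ (cmax ^ n) ^ ((d' : ℝ) - s₀) :=
            Real.rpow_le_rpow hLp.le hLles (by linarith)
          have e3 : (0:ℝ) < L ^ s₀ := Real.rpow_pos_of_pos hLp _
          calc L ^ (d' : ℝ) = L ^ ((d' : ℝ) - s₀) * L ^ s₀ := e1
          _ ≤ (cmax ^ n) ^ ((d' : ℝ) - s₀) * L ^ s₀ :=
              mul_le_mul_of_nonneg_right e2 e3.le
          _ = (cmax ^ n) ^ ((d' : ℝ) - s₀) * c₀⁻¹ * (c₀ * L ^ s₀) := by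
              field_simp
        have hstep3 : ENNReal.ofReal (c₀ * L ^ s₀) ≤ μ t (fam n w) := by
          rw [hfamdef]
          simp only [if_pos hw]
          exact hmeas_lb _ _ hw.2.1
        calc EMetric.diam (fam n w) ^ (d' : ℝ) ≤ ENNReal.ofReal (L ^ (d' : ℝ)) := hstep1
        _ ≤ ENNReal.ofReal ((cmax ^ n) ^ ((d' : ℝ) - s₀) * c₀⁻¹ * (c₀ * L ^ s₀)) :=
            ENNReal.ofReal_le_ofReal hstep2
        _ = ENNReal.ofReal ((cmax ^ n) ^ ((d' : ℝ) - s₀) * c₀⁻¹)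
              * ENNReal.ofReal (c₀ * L ^ s₀) := by
            rw [← ENNReal.ofReal_mul (by positivity)]
        _ ≤ ENNReal.ofReal ((cmax ^ n) ^ ((d' : ℝ) - s₀) * c₀⁻¹) * μ t (fam n w) :=
            mul_le_mul_right hstep3 _
      · have hfame : fam n w = ∅ := by rw [hfamdef]; simp only [if_neg hw]
        rw [hfame]
        simp only [EMetric.diam, Metric.ediam_empty]
        rw [ENNReal.zero_rpow_of_pos h0d']
        exact zero_le
    calc (∑' w : List (Fin N), EMetric.diam (fam n w) ^ (d' : ℝ))
        ≤ ∑' w : List (Fin N),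
            ENNReal.ofReal ((cmax ^ n) ^ ((d' : ℝ) - s₀) * c₀⁻¹) * μ t (fam n w) :=
          ENNReal.tsum_le_tsum hterm
    _ = ENNReal.ofReal ((cmax ^ n) ^ ((d' : ℝ) - s₀) * c₀⁻¹)
          * ∑' w : List (Fin N), μ t (fam n w) := ENNReal.tsum_mul_left
    _ ≤ ENNReal.ofReal ((cmax ^ n) ^ ((d' : ℝ) - s₀) * c₀⁻¹) * 1 :=
          mul_le_mul_right (hsum_le_one n) _
    _ = ENNReal.ofReal ((cmax ^ n) ^ ((d' : ℝ) - s₀) * c₀⁻¹) := mul_one _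
  -- apply the Hausdorff-measure covering bound
  have hr0 : Tendsto (fun n : ℕ => ENNReal.ofReal (cmax ^ n)) atTop (nhds 0) := by
    have h1 : Tendsto (fun n : ℕ => cmax ^ n) atTop (nhds 0) :=
      tendsto_pow_atTop_nhds_zero_of_lt_one hcmax0.le hcmax1
    have h2 := (ENNReal.continuous_ofReal.tendsto 0).comp h1
    rw [ENNReal.ofReal_zero] at h2
    exact h2
  have hH : μH[(d' : ℝ)] Aset
      ≤ liminf (fun n : ℕ => ∑' w : List (Fin N), EMetric.diam (fam n w) ^ (d' : ℝ)) atTop :=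
    Measure.hausdorffMeasure_le_liminf_tsum (d' : ℝ) Aset
      (fun n => ENNReal.ofReal (cmax ^ n)) hr0 fam
      (Eventually.of_forall fun n => hdiam n) (Eventually.of_forall hcover)
  have hbound0 : Tendsto
      (fun n : ℕ => ENNReal.ofReal ((cmax ^ n) ^ ((d' : ℝ) - s₀) * c₀⁻¹)) atTop (nhds 0) := by
    have heq : ∀ n : ℕ, (cmax ^ n) ^ ((d' : ℝ) - s₀) = (cmax ^ ((d' : ℝ) - s₀)) ^ n := by
      intro n
      rw [← Real.rpow_natCast cmax n, ← Real.rpow_mul hcmax0.le, mul_comm,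
        Real.rpow_mul hcmax0.le, Real.rpow_natCast]
    have h1 : Tendsto (fun n : ℕ => (cmax ^ ((d' : ℝ) - s₀)) ^ n * c₀⁻¹) atTop (nhds 0) := by
      have := (tendsto_pow_atTop_nhds_zero_of_lt_one
        (Real.rpow_nonneg hcmax0.le _)
        (Real.rpow_lt_one hcmax0.le hcmax1 (sub_pos.mpr hs₀lt))).mul_const c₀⁻¹
      simpa using this
    have h2 := (ENNReal.continuous_ofReal.tendsto 0).comp h1
    simp only [ENNReal.ofReal_zero] at h2
    convert h2 using 2 with n
    simp [heq n, Function.comp]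
  have hliminf0 : liminf
      (fun n : ℕ => ∑' w : List (Fin N), EMetric.diam (fam n w) ^ (d' : ℝ)) atTop = 0 := by
    apply le_antisymm _ zero_le
    calc liminf (fun n : ℕ => ∑' w : List (Fin N), EMetric.diam (fam n w) ^ (d' : ℝ)) atTop
        ≤ liminf (fun n : ℕ =>
            ENNReal.ofReal ((cmax ^ n) ^ ((d' : ℝ) - s₀) * c₀⁻¹)) atTop :=
          liminf_le_liminf (Eventually.of_forall htsum)
    _ = 0 := hbound0.liminf_eq
  rw [hliminf0] at hH
  have : μH[(d' : ℝ)] Aset = 0 := le_antisymm hH zero_le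
  rw [hd'] at this
  exact ENNReal.top_ne_zero this
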